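/- Soundness of type inference: if the principal-typing judgment P ⊳ Θ; (Φ,Ψ); Ξ is derivable and m is a type mapping satisfying all constraints in Ξ, then m(Θ) ⊢ P : (m(Φ), m(Ψ)) in the ordinary typing system. -/

import Mathlib

/-- CLS sequences over an alphabet `El`. -/
inductive CLSSeq (El : Type) : Type where
  | eps : CLSSeq El
  | elem : El → CLSSeq El
  | cat : CLSSeq El → CLSSeq El → CLSSeq El

/-- CLS terms over an alphabet `El`. -/
inductive CLSTerm (El : Type) : Type where
  | seq : CLSSeq El → CLSTerm El
  | loop : CLSSeq El → CLSTerm El → CLSTerm El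
  | par : CLSTerm El → CLSTerm El → CLSTerm El
/-- Excluded basic types of a set of present basic types. -/
def excl {BT : Type} (Exc : BT → Set BT) (P : Set BT) : Set BT := ⋃ t ∈ P, Exc t

/-- A type `(P,R)` is well formed. -/
def WF {BT : Type} (Exc : BT → Set BT) (ty : Set BT × Set BT) : Prop :=
  ty.1 ∩ excl Exc ty.1 = ∅ ∧ ty.1 ∩ ty.2 = ∅ ∧ ty.2 ∩ excl Exc ty.1 = ∅

/-- Compatibility of types. -/
def Compat {BT : Type} (Exc : BT → Set BT) (ty ty' : Set BT × Set BT) : Prop :=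
  excl Exc ty.1 ∩ ty'.1 = ∅ ∧ excl Exc ty.1 ∩ ty'.2 = ∅ ∧
  excl Exc ty'.1 ∩ ty.1 = ∅ ∧ excl Exc ty'.1 ∩ ty.2 = ∅

/-- Conjunction of compatible types. -/
def conj {BT : Type} (ty ty' : Set BT × Set BT) : Set BT × Set BT :=
  (ty.1 ∪ ty'.1, (ty.2 ∪ ty'.2) \ (ty.1 ∪ ty'.1))
/-- Typing judgment for CLS sequences. -/
inductive SeqTy {El BT : Type} (Γ : El → BT) (Req Exc : BT → Set BT) :
    CLSSeq El → Set BT × Set BT → Prop where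
  | eps : SeqTy Γ Req Exc .eps (∅, ∅)
  | elem (a : El) : SeqTy Γ Req Exc (.elem a) ({Γ a}, Req (Γ a))
  | cat : SeqTy Γ Req Exc s₁ ty₁ → SeqTy Γ Req Exc s₂ ty₂ → Compat Exc ty₁ ty₂ →
      SeqTy Γ Req Exc (.cat s₁ s₂) (conj ty₁ ty₂)

/-- Typing judgment for CLS terms. -/
inductive TermTy {El BT : Type} (Γ : El → BT) (Req Exc : BT → Set BT) :
    CLSTerm El → Set BT × Set BT → Prop where
  | seq : SeqTy Γ Req Exc s ty → TermTy Γ Req Exc (.seq s) ty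
  | par : TermTy Γ Req Exc t₁ ty₁ → TermTy Γ Req Exc t₂ ty₂ → Compat Exc ty₁ ty₂ →
      TermTy Γ Req Exc (.par t₁ t₂) (conj ty₁ ty₂)
  | loop : SeqTy Γ Req Exc s ty → TermTy Γ Req Exc t ty' → Compat Exc ty ty' →
      ty'.2 ⊆ ty.1 → TermTy Γ Req Exc (.loop s t) (ty.1, ty.2 \ ty'.1)
/-- CLS sequence patterns: sequences with sequence variables and element variables. -/
inductive SPat (El : Type) : Type where
  | eps : SPat El
  | elem : El → SPat El
  | cat : SPat El → SPat El → SPat El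
  | svar : ℕ → SPat El
  | evar : ℕ → SPat El

/-- CLS patterns: terms with term variables (and sequence/element variables). -/
inductive Pat (El : Type) : Type where
  | sp : SPat El → Pat El
  | loop : SPat El → Pat El → Pat El
  | par : Pat El → Pat El → Pat El
  | tvar : ℕ → Pat El

/-- An instantiation of variables. -/
structure Inst (El : Type) where
  tv : ℕ → CLSTerm El
  sv : ℕ → CLSSeq El
  ev : ℕ → El

def applyS {El : Type} (σ : Inst El) : SPat El → CLSSeq El
  | .eps => .eps
  | .elem a => .elem a
  | .cat s₁ s₂ => .cat (applyS σ s₁) (applyS σ s₂)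
  | .svar x => σ.sv x
  | .evar x => .elem (σ.ev x)

def applyP {El : Type} (σ : Inst El) : Pat El → CLSTerm El
  | .sp s => .seq (applyS σ s)
  | .loop s p => .loop (applyS σ s) (applyP σ p)
  | .par p₁ p₂ => .par (applyP σ p₁) (applyP σ p₂)
  | .tvar X => σ.tv X

/-- A basis assigns types to variables. -/
structure CLSBasis (BT : Type) where
  tv : ℕ → Set BT × Set BT
  sv : ℕ → Set BT × Set BT
  ev : ℕ → BT

/-- Typing judgment for sequence patterns. -/
inductive SPatTy {El BT : Type} (Γ : El → BT) (Req Exc : BT → Set BT) (Δ : CLSBasis BT) :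
    SPat El → Set BT × Set BT → Prop where
  | eps : SPatTy Γ Req Exc Δ .eps (∅, ∅)
  | elem (a : El) : SPatTy Γ Req Exc Δ (.elem a) ({Γ a}, Req (Γ a))
  | cat : SPatTy Γ Req Exc Δ s₁ ty₁ → SPatTy Γ Req Exc Δ s₂ ty₂ → Compat Exc ty₁ ty₂ →
      SPatTy Γ Req Exc Δ (.cat s₁ s₂) (conj ty₁ ty₂)
  | svar (x : ℕ) : SPatTy Γ Req Exc Δ (.svar x) (Δ.sv x)
  | evar (x : ℕ) : SPatTy Γ Req Exc Δ (.evar x) ({Δ.ev x}, Req (Δ.ev x))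

/-- Typing judgment for patterns. -/
inductive PatTy {El BT : Type} (Γ : El → BT) (Req Exc : BT → Set BT) (Δ : CLSBasis BT) :
    Pat El → Set BT × Set BT → Prop where
  | sp : SPatTy Γ Req Exc Δ s ty → PatTy Γ Req Exc Δ (.sp s) ty
  | par : PatTy Γ Req Exc Δ p₁ ty₁ → PatTy Γ Req Exc Δ p₂ ty₂ → Compat Exc ty₁ ty₂ →
      PatTy Γ Req Exc Δ (.par p₁ p₂) (conj ty₁ ty₂)
  | loop : SPatTy Γ Req Exc Δ s ty → PatTy Γ Req Exc Δ p ty' → Compat Exc ty ty' →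
      ty'.2 ⊆ ty.1 → PatTy Γ Req Exc Δ (.loop s p) (ty.1, ty.2 \ ty'.1)
  | tvar (X : ℕ) : PatTy Γ Req Exc Δ (.tvar X) (Δ.tv X)

/-- An instantiation agrees with a basis. -/
def Agrees {El BT : Type} (Γ : El → BT) (Req Exc : BT → Set BT)
    (σ : Inst El) (Δ : CLSBasis BT) : Prop :=
  (∀ X, TermTy Γ Req Exc (σ.tv X) (Δ.tv X)) ∧
  (∀ x, SeqTy Γ Req Exc (σ.sv x) (Δ.sv x)) ∧
  (∀ x, Γ (σ.ev x) = Δ.ev x)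
/-- Formal set expressions over basic types and type variables. -/
inductive TE (BT : Type) : Type where
  | const : Set BT → TE BT
  | evar : ℕ → TE BT            -- e-type variable φ_x (as a singleton set)
  | reqOf : ℕ → TE BT           -- the required set R_{φ_x}
  | pvarS : ℕ → TE BT           -- p-type variable of a sequence variable
  | rvarS : ℕ → TE BT           -- r-type variable of a sequence variable
  | pvarT : ℕ → TE BT           -- p-type variable of a term variable
  | rvarT : ℕ → TE BT           -- r-type variable of a term variable
  | union : TE BT → TE BT → TE BT
  | diff : TE BT → TE BT → TE BT

/-- A type mapping: values for the e-, p- and r-type variables. -/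
structure TMap (BT : Type) where
  ev : ℕ → BT
  pS : ℕ → Set BT
  rS : ℕ → Set BT
  pT : ℕ → Set BT
  rT : ℕ → Set BT

def TE.eval {BT : Type} (Req : BT → Set BT) (m : TMap BT) : TE BT → Set BT
  | .const s => s
  | .evar x => {m.ev x}
  | .reqOf x => Req (m.ev x)
  | .pvarS x => m.pS x
  | .rvarS x => m.rS x
  | .pvarT X => m.pT X
  | .rvarT X => m.rT X
  | .union e₁ e₂ => e₁.eval Req m ∪ e₂.eval Req m
  | .diff e₁ e₂ => e₁.eval Req m \ e₂.eval Req m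

/-- Constraints produced by type inference. -/
inductive Constr (BT : Type) : Type where
  | ok : TE BT × TE BT → TE BT × TE BT → Constr BT
  | subset : TE BT → TE BT → Constr BT

/-- Satisfaction of a constraint by a type mapping. -/
def Satisfies {BT : Type} (Req Exc : BT → Set BT) (m : TMap BT) : Constr BT → Prop
  | .ok ty ty' =>
      Compat Exc (ty.1.eval Req m, ty.2.eval Req m) (ty'.1.eval Req m, ty'.2.eval Req m)
  | .subset e₁ e₂ => e₁.eval Req m ⊆ e₂.eval Req m

/-- Formal conjunction of formal types. -/
def fconj {BT : Type} (ty ty' : TE BT × TE BT) : TE BT × TE BT :=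
  (.union ty.1 ty'.1, .diff (.union ty.2 ty'.2) (.union ty.1 ty'.1))

/-- Principal-typing inference for sequence patterns. -/
inductive SInf {El BT : Type} (Γ : El → BT) (Req : BT → Set BT) :
    SPat El → TE BT × TE BT → List (Constr BT) → Prop where
  | eps : SInf Γ Req .eps (.const ∅, .const ∅) []
  | elem (a : El) : SInf Γ Req (.elem a) (.const {Γ a}, .const (Req (Γ a))) []
  | evar (x : ℕ) : SInf Γ Req (.evar x) (.evar x, .reqOf x) []
  | svar (x : ℕ) : SInf Γ Req (.svar x) (.pvarS x, .rvarS x) []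
  | cat : SInf Γ Req s₁ ty₁ Ξ₁ → SInf Γ Req s₂ ty₂ Ξ₂ →
      SInf Γ Req (.cat s₁ s₂) (fconj ty₁ ty₂) (.ok ty₁ ty₂ :: (Ξ₁ ++ Ξ₂))

/-- Principal-typing inference for patterns. -/
inductive PInf {El BT : Type} (Γ : El → BT) (Req : BT → Set BT) :
    Pat El → TE BT × TE BT → List (Constr BT) → Prop where
  | sp : SInf Γ Req s ty Ξ → PInf Γ Req (.sp s) ty Ξ
  | tvar (X : ℕ) : PInf Γ Req (.tvar X) (.pvarT X, .rvarT X) []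
  | par : PInf Γ Req p₁ ty₁ Ξ₁ → PInf Γ Req p₂ ty₂ Ξ₂ →
      PInf Γ Req (.par p₁ p₂) (fconj ty₁ ty₂) (.ok ty₁ ty₂ :: (Ξ₁ ++ Ξ₂))
  | loop : SInf Γ Req s ty Ξ → PInf Γ Req p ty' Ξ' →
      PInf Γ Req (.loop s p) (ty.1, .diff ty.2 ty'.1)
        (.ok ty ty' :: .subset ty'.2 ty.1 :: (Ξ ++ Ξ'))

/-- The basis `m(Θ)` induced by a type mapping on the canonical principal basis. -/
def basisOf {BT : Type} (m : TMap BT) : CLSBasis BT :=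
  ⟨fun X => (m.pT X, m.rT X), fun x => (m.pS x, m.rS x), m.ev⟩


lemma sinf_sound {El BT : Type} (Γ : El → BT) (Req Exc : BT → Set BT)
    {s : SPat El} {ty : TE BT × TE BT} {Ξ : List (Constr BT)} (m : TMap BT)
    (hinf : SInf Γ Req s ty Ξ)
    (hsat : ∀ c ∈ Ξ, Satisfies Req Exc m c) :
    SPatTy Γ Req Exc (basisOf m) s (ty.1.eval Req m, ty.2.eval Req m) := by
  induction hinf with
  | eps => exact SPatTy.eps
  | elem a => exact SPatTy.elem a
  | evar x => exact SPatTy.evar x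
  | svar x => exact SPatTy.svar x
  | cat h1 h2 ih1 ih2 =>
    have hc := hsat _ (List.mem_cons_self)
    have ih1' := ih1 (fun c hc => hsat c (List.mem_cons_of_mem _ (List.mem_append_left _ hc)))
    have ih2' := ih2 (fun c hc => hsat c (List.mem_cons_of_mem _ (List.mem_append_right _ hc)))
    exact SPatTy.cat ih1' ih2' hc

lemma pinf_sound {El BT : Type} (Γ : El → BT) (Req Exc : BT → Set BT)
    {p : Pat El} {ty : TE BT × TE BT} {Ξ : List (Constr BT)} (m : TMap BT)
    (hinf : PInf Γ Req p ty Ξ)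
    (hsat : ∀ c ∈ Ξ, Satisfies Req Exc m c) :
    PatTy Γ Req Exc (basisOf m) p (ty.1.eval Req m, ty.2.eval Req m) := by
  induction hinf with
  | sp h => exact PatTy.sp (sinf_sound Γ Req Exc m h hsat)
  | tvar X => exact PatTy.tvar X
  | par h1 h2 ih1 ih2 =>
    have hc := hsat _ (List.mem_cons_self)
    have ih1' := ih1 (fun c hc => hsat c (List.mem_cons_of_mem _ (List.mem_append_left _ hc)))
    have ih2' := ih2 (fun c hc => hsat c (List.mem_cons_of_mem _ (List.mem_append_right _ hc)))
    exact PatTy.par ih1' ih2' hc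
  | loop hs hp ih =>
    have hc := hsat _ (List.mem_cons_self)
    have hsub := hsat _ (List.mem_cons_of_mem _ (List.mem_cons_self))
    have hS := sinf_sound Γ Req Exc m hs
      (fun c hc => hsat c (List.mem_cons_of_mem _ (List.mem_cons_of_mem _ (List.mem_append_left _ hc))))
    have ih' := ih (fun c hc => hsat c (List.mem_cons_of_mem _ (List.mem_cons_of_mem _ (List.mem_append_right _ hc))))
    exact PatTy.loop hS ih' hc hsub

/-- soundness of type inference. -/
theorem inference_sound {El BT : Type} (Γ : El → BT) (Req Exc : BT → Set BT)
    (p : Pat El) (Φ Ψ : TE BT) (Ξ : List (Constr BT)) (m : TMap BT)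
    (hinf : PInf Γ Req p (Φ, Ψ) Ξ)
    (hsat : ∀ c ∈ Ξ, Satisfies Req Exc m c) :
    PatTy Γ Req Exc (basisOf m) p (Φ.eval Req m, Ψ.eval Req m) := pinf_sound Γ Req Exc m hinf hsat
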